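/- Let X : [0,1] → ℝ be a continuous function, Φ, Φ̃ : ℝ₊ → ℝ₊ with Φ̃(x)/Φ(x) → ∞ as x → 0⁺, Φ, Φ̃ > 0 on (0,∞). If the limiting Φ-variation 𝒱*_Φ(X) > 0 (possibly +∞), then the Φ̃-variation 𝒱_{Φ̃}(X) = ∞. -/
import Mathlib


open MeasureTheory Topology ENNReal

/-- The limiting `g`-variation over partitions of `[a,b]` with mesh at most `δ`,
as `δ → 0`, with values in `ℝ≥0∞`. -/
noncomputable def limitingVariation (g : ℝ → ℝ → ℝ) (a b : ℝ) : ℝ≥0∞ :=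
  ⨅ (δ : ℝ) (_ : 0 < δ), sSup {S : ℝ≥0∞ | ∃ (n : ℕ) (t : ℕ → ℝ), 0 < n ∧
    t 0 = a ∧ t n = b ∧ (∀ i < n, t i < t (i + 1)) ∧ (∀ i < n, t (i + 1) - t i ≤ δ) ∧
    S = ∑ i ∈ Finset.range n, ENNReal.ofReal (g (t i) (t (i + 1)))}

/-- The set of all sums `∑ g(tᵢ, tᵢ₊₁)` in `ℝ≥0∞` over partitions of `[a,b]`. -/
def partitionSumsE (g : ℝ → ℝ → ℝ) (a b : ℝ) : Set ℝ≥0∞ :=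
  {S | ∃ (n : ℕ) (t : ℕ → ℝ), 0 < n ∧ t 0 = a ∧ t n = b ∧
    (∀ i < n, t i < t (i + 1)) ∧
    S = ∑ i ∈ Finset.range n, ENNReal.ofReal (g (t i) (t (i + 1)))}

theorem optimality_of_variation_function (X : ℝ → ℝ) (hX : ContinuousOn X (Set.Icc 0 1))
    (Φ Φt : ℝ → ℝ) (hΦ0 : Φ 0 = 0) (hΦt0 : Φt 0 = 0)
    (hΦpos : ∀ x > (0 : ℝ), 0 < Φ x) (hΦtpos : ∀ x > (0 : ℝ), 0 < Φt x)
    (hratio : Filter.Tendsto (fun x => Φt x / Φ x) (𝓝[>] (0 : ℝ)) Filter.atTop)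
    (hpos : 0 < limitingVariation (fun s t => Φ |X t - X s|) 0 1) :
    sSup (partitionSumsE (fun s t => Φt |X t - X s|) 0 1) = ⊤ := by
  apply ENNReal.eq_top_of_forall_nnreal_le
  intro r
  obtain ⟨ε, hε0, hεL⟩ := exists_between hpos
  set ε' : ℝ≥0∞ := min ε 1 with hε'def
  have hε'0 : 0 < ε' := lt_min hε0 one_pos
  have hε'L : ε' < limitingVariation (fun s t => Φ |X t - X s|) 0 1 :=
    lt_of_le_of_lt (min_le_left _ _) hεL
  have hε'top : ε' ≠ ⊤ := ne_top_of_le_ne_top one_ne_top (min_le_right _ _)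
  set c : ℝ := ε'.toReal with hc
  have hc0 : 0 < c := ENNReal.toReal_pos hε'0.ne' hε'top
  set Kr : ℝ := (r : ℝ) / c with hKrdef
  have hKr0 : 0 ≤ Kr := div_nonneg r.coe_nonneg hc0.le
  -- ratio bound
  have hev : ∀ᶠ x in 𝓝[>] (0:ℝ), Kr ≤ Φt x / Φ x :=
    hratio.eventually (Filter.eventually_ge_atTop Kr)
  obtain ⟨η, hη0, hη⟩ := mem_nhdsGT_iff_exists_Ioo_subset.mp hev
  -- uniform continuity
  have hUC : UniformContinuousOn X (Set.Icc 0 1) :=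
    isCompact_Icc.uniformContinuousOn_of_continuous hX
  obtain ⟨δ, hδ0, hδ⟩ := Metric.uniformContinuousOn_iff.mp hUC η hη0
  -- get a partition with mesh ≤ δ/2 and Φ-sum > ε'
  have hle : limitingVariation (fun s t => Φ |X t - X s|) 0 1 ≤
      sSup {S : ℝ≥0∞ | ∃ (n : ℕ) (t : ℕ → ℝ), 0 < n ∧
        t 0 = 0 ∧ t n = 1 ∧ (∀ i < n, t i < t (i + 1)) ∧ (∀ i < n, t (i + 1) - t i ≤ δ/2) ∧
        S = ∑ i ∈ Finset.range n, ENNReal.ofReal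
          ((fun s t => Φ |X t - X s|) (t i) (t (i + 1)))} := by
    rw [limitingVariation]
    exact iInf₂_le (δ/2) (half_pos hδ0)
  obtain ⟨S, hSmem, hSgt⟩ := lt_sSup_iff.mp (lt_of_lt_of_le hε'L hle)
  obtain ⟨n, t, hn, ht0, htn, hmono, hmesh, hSeq⟩ := hSmem
  have hmono' : ∀ i j, i ≤ j → j ≤ n → t i ≤ t j := by
    intro i j hij hjn
    induction j with
    | zero => exact le_of_eq (congrArg t (Nat.le_zero.mp hij))
    | succ j ih =>
      rcases Nat.eq_or_lt_of_le hij with h | h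
      · rw [h]
      · exact le_trans (ih (Nat.lt_succ_iff.mp h) (le_trans (Nat.le_succ j) hjn))
          (le_of_lt (hmono j (by omega)))
  have hrange : ∀ i ≤ n, t i ∈ Set.Icc (0:ℝ) 1 := by
    intro i hi
    constructor
    · rw [← ht0]; exact hmono' 0 i (Nat.zero_le i) hi
    · rw [← htn]; exact hmono' i n hi le_rfl
  have hsmall : ∀ i < n, |X (t (i+1)) - X (t i)| < η := by
    intro i hi
    have h1 := hrange i hi.le
    have h2 := hrange (i+1) hi
    have hd : dist (t (i+1)) (t i) < δ := by
      rw [Real.dist_eq]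
      have hm := hmesh i hi
      have hlt := hmono i hi
      rw [abs_of_nonneg (by linarith)]
      linarith
    have := hδ (t (i+1)) h2 (t i) h1 hd
    rwa [Real.dist_eq] at this
  have hterm : ∀ i < n, ENNReal.ofReal Kr * ENNReal.ofReal (Φ |X (t (i+1)) - X (t i)|)
      ≤ ENNReal.ofReal (Φt |X (t (i+1)) - X (t i)|) := by
    intro i hi
    set x := |X (t (i+1)) - X (t i)| with hxdef
    rcases eq_or_lt_of_le (abs_nonneg (X (t (i+1)) - X (t i))) with h | h
    · rw [← hxdef] at h
      rw [← h]
      simp [hΦ0, hΦt0]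
    · rw [← hxdef] at h
      have hx : x ∈ Set.Ioo (0:ℝ) η := ⟨h, hsmall i hi⟩
      have hK : Kr ≤ Φt x / Φ x := hη hx
      have hΦx := hΦpos x h
      have hmul : Kr * Φ x ≤ Φt x := (le_div_iff₀ hΦx).mp hK
      rw [← ENNReal.ofReal_mul hKr0]
      exact ENNReal.ofReal_le_ofReal hmul
  have hsum : (r : ℝ≥0∞) ≤ ∑ i ∈ Finset.range n,
      ENNReal.ofReal (Φt |X (t (i+1)) - X (t i)|) := by
    have h1 : ENNReal.ofReal Kr * S ≤ ∑ i ∈ Finset.range n,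
        ENNReal.ofReal (Φt |X (t (i+1)) - X (t i)|) := by
      rw [hSeq, Finset.mul_sum]
      exact Finset.sum_le_sum fun i hi => hterm i (Finset.mem_range.mp hi)
    refine le_trans (le_trans ?_ (mul_le_mul_right hSgt.le (ENNReal.ofReal Kr))) h1
    rw [← ENNReal.ofReal_toReal hε'top, ← hc, ← ENNReal.ofReal_mul hKr0,
      hKrdef, div_mul_cancel₀ _ hc0.ne']
    simp
  refine le_trans hsum (le_sSup ?_)
  exact ⟨n, t, hn, ht0, htn, hmono, rfl⟩
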